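/- Let S be a string, a a character, and w a nonempty string with occ_S(w) ≥ 2. If (α, β) ∈ Φ_{aS}(w) but (α, β) ∉ Φ_S(w), then α = a, w is a prefix of S, occ_S(aw) = 0, β = S[|w|+1], and occ_S(wβ) = 1 (so w is the longest prefix of S that occurs at least twice in S). In particular, at most one string w that occurs at least twice in S can gain a new pair in Φ when the character a is prepended to S. -/

import Mathlib

variable {Γ : Type*} [DecidableEq Γ]

/-- `occ S w` is the number of occurrences of `w` as a contiguous substring of `S`,
i.e., the number of (0-based) indices `i` with `S[i..i+|w|-1] = w`. -/
def occ (S w : List Γ) : ℕ :=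
  ((List.range S.length).filter fun i => (S.drop i).take w.length = w).length

/-- `Phi S w` is the set of pairs `(α, β)` of characters such that
`occ S (αwβ) = occ S (αw) = occ S (wβ) = 1`. -/
def Phi (S w : List Γ) : Set (Γ × Γ) :=
  {p | occ S (p.1 :: (w ++ [p.2])) = 1 ∧ occ S (p.1 :: w) = 1 ∧ occ S (w ++ [p.2]) = 1}

/-- The net frequency of `w` in `S`. -/
noncomputable def phi (S w : List Γ) : ℕ := (Phi S w).ncard

lemma occ_cons (S : List Γ) (a : Γ) (w : List Γ) :
    occ (a :: S) w = occ S w + if w <+: (a :: S) then 1 else 0 := by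
  unfold occ
  rw [List.length_cons, List.range_succ_eq_map, List.filter_cons, List.filter_map]
  simp only [List.drop_zero, List.drop_succ_cons, List.length_map, Function.comp_def]
  by_cases h : List.take w.length (a::S) = w
  · rw [if_pos (List.prefix_iff_eq_take.mpr h.symm)]
    simp [h, Nat.add_comm]
  · rw [if_neg (fun hp => h (List.prefix_iff_eq_take.mp hp).symm)]
    simp [h]

lemma occ_le_of_prefix (S : List Γ) {u v : List Γ} (h : u <+: v) :
    occ S v ≤ occ S u := by
  apply List.Sublist.length_le
  apply List.monotone_filter_right
  obtain ⟨t, rfl⟩ := h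
  intro i hi
  simp only [decide_eq_true_eq] at *
  have := congrArg (List.take u.length) hi
  rwa [List.take_take, min_eq_left (by simp), List.take_left] at this

lemma occ_eq_card (S w : List Γ) :
    occ S w = ((Finset.range S.length).filter fun i => (S.drop i).take w.length = w).card := rfl

lemma occ_tail_le (S : List Γ) (α : Γ) (u : List Γ) (hu : u ≠ []) :
    occ S (α :: u) ≤ occ S u := by
  rw [occ_eq_card, occ_eq_card]
  apply Finset.card_le_card_of_injOn (fun i => i + 1)
  · intro i hi
    simp only [Finset.coe_filter, Set.mem_setOf_eq, Finset.mem_coe, Finset.mem_filter, Finset.mem_range] at *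
    obtain ⟨hi1, hi2⟩ := hi
    obtain ⟨x, xs, hx⟩ := List.exists_cons_of_ne_nil (l := S.drop i) (by
      intro h; rw [h] at hi2; simp at hi2)
    rw [hx] at hi2
    simp only [List.length_cons, List.take_succ_cons, List.cons.injEq] at hi2
    have hdrop : S.drop (i+1) = xs := by
      rw [← List.tail_drop, hx]; rfl
    have hlen : u.length ≤ xs.length := by
      have := congrArg List.length hi2.2; simp [List.length_take] at this; omega
    have hds : (S.drop i).length = S.length - i := List.length_drop ..
    rw [hx] at hds; simp at hds
    have hu' : 1 ≤ u.length := List.length_pos_iff.mpr hu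
    exact ⟨by omega, by rw [hdrop]; exact hi2.2⟩
  · intro a _ b _ h; simpa using h

lemma one_le_occ (S w : List Γ) (hw : w ≠ []) (h : w <+: S) : 1 ≤ occ S w := by
  have h0 : 0 ∈ (List.range S.length).filter fun i => (S.drop i).take w.length = w := by
    rw [List.mem_filter]
    refine ⟨?_, by simp [(List.prefix_iff_eq_take.mp h).symm]⟩
    simp only [List.mem_range]
    have := h.length_le; have := List.length_pos_iff.mpr hw; omega
  exact List.length_pos_iff.mpr (List.ne_nil_of_mem h0)

/-- If a nonempty repeat `w` of `S` gains a new pair `(α, β)` in `Phi`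
when `a` is prepended to `S`, then `α = a`, `w` is a prefix of `S`, `occ S (a::w) = 0`,
`β = S[|w|+1]` (i.e. `w ++ [β]` is a prefix of `S`), `occ S (w ++ [β]) = 1`, and `w` is
the longest prefix of `S` occurring at least twice in `S`. -/
theorem stmt9 (S : List Γ) (a : Γ) (w : List Γ) (hw : w ≠ [])
    (hrep : 2 ≤ occ S w)
    (α β : Γ) (hin : (α, β) ∈ Phi (a :: S) w) (hout : (α, β) ∉ Phi S w) :
    α = a ∧
    w <+: S ∧
    occ S (a :: w) = 0 ∧
    (w ++ [β]) <+: S ∧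
    occ S (w ++ [β]) = 1 ∧
    (∀ w' : List Γ, w' <+: S → 2 ≤ occ S w' → w'.length ≤ w.length) := by
  obtain ⟨h1, h2, h3⟩ := hin
  dsimp only at h1 h2 h3
  rw [occ_cons] at h1 h2 h3
  have hP2 : (α :: w) <+: (a :: S) := by
    by_contra hP2
    rw [if_neg hP2] at h2
    have hP1 : ¬ (α :: (w ++ [β])) <+: (a :: S) := fun hp =>
      hP2 ((List.cons_prefix_cons.mpr ⟨rfl, List.prefix_append w [β]⟩).trans hp)
    rw [if_neg hP1] at h1
    have hP3 : (w ++ [β]) <+: (a :: S) := by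
      by_contra hP3
      rw [if_neg hP3] at h3
      refine hout ⟨?_, ?_, ?_⟩ <;> dsimp only <;> omega
    rw [if_pos hP3] at h3
    have := occ_tail_le S α (w ++ [β]) (by simp)
    omega
  rw [if_pos hP2] at h2
  obtain ⟨hαa, hwS⟩ := List.cons_prefix_cons.mp hP2
  have hocc_aw : occ S (a :: w) = 0 := by rw [← hαa]; omega
  have hle1 : occ S (α :: (w ++ [β])) ≤ occ S (α :: w) :=
    occ_le_of_prefix S (List.cons_prefix_cons.mpr ⟨rfl, List.prefix_append w [β]⟩)
  have hP1 : (α :: (w ++ [β])) <+: (a :: S) := by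
    by_contra hP1
    rw [if_neg hP1] at h1
    omega
  obtain ⟨-, hwβS⟩ := List.cons_prefix_cons.mp hP1
  have hge : 1 ≤ occ S (w ++ [β]) := one_le_occ S _ (by simp) hwβS
  have h3' : occ S (w ++ [β]) = 1 := by
    by_cases hP3 : (w ++ [β]) <+: (a :: S)
    · rw [if_pos hP3] at h3; omega
    · rw [if_neg hP3] at h3; omega
  refine ⟨hαa, hwS, hocc_aw, hwβS, h3', ?_⟩
  intro w' hw' hrep'
  by_contra hlen
  push_neg at hlen
  have hpre : (w ++ [β]) <+: w' := by
    apply List.prefix_of_prefix_length_le hwβS hw'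
    simp; omega
  have := occ_le_of_prefix S hpre
  omega
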